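/- Let θ : ℝ/ℤ → ℝ be Lipschitz with ‖θ'‖_∞ ≤ n, θ(x) = 0, and n ≥ 8. Then |σ_n θ(x)| ≤ 1/4 + ‖θ‖_∞/2. -/

import Mathlib

open Real intervalIntegral

/-- The Fejér kernel with period 1. -/
noncomputable def fejerKernel (n : ℕ) (y : ℝ) : ℝ :=
  (1 / n) * (Real.sin (n * π * y) / Real.sin (π * y)) ^ 2

/-- The `n`-th Fejér mean of a 1-periodic function `θ` at `x`:
`σ_n θ(x) = ∫_{-1/2}^{1/2} θ(x - y) F_n(y) dy`. -/
noncomputable def fejerMean (n : ℕ) (θ : ℝ → ℝ) (x : ℝ) : ℝ :=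
  ∫ y in (-(1/2) : ℝ)..(1/2), θ (x - y) * fejerKernel n y

lemma my_sin_ge_sub_cube {t : ℝ} (ht : 0 ≤ t) : t - t ^ 3 / 6 ≤ Real.sin t := by
  have hmono : MonotoneOn (fun u : ℝ => Real.sin u - (u - u ^ 3 / 6)) (Set.Ici 0) := by
    have hd : ∀ u : ℝ, HasDerivAt (fun u : ℝ => Real.sin u - (u - u ^ 3 / 6))
        (Real.cos u - (1 - 3 * u ^ 2 / 6)) u := by
      intro u
      have h1 : HasDerivAt (fun u : ℝ => u ^ 3 / 6) (3 * u ^ 2 / 6) u := by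
        simpa using (hasDerivAt_pow 3 u).div_const 6
      exact (Real.hasDerivAt_sin u).sub ((hasDerivAt_id' u).sub h1)
    apply monotoneOn_of_deriv_nonneg (convex_Ici 0)
    · exact (Continuous.continuousOn (by continuity))
    · intro u hu
      exact (hd u).differentiableAt.differentiableWithinAt
    · intro u hu
      rw [(hd u).deriv]
      nlinarith [Real.one_sub_sq_div_two_le_cos (x := u)]
  have h0 := hmono (Set.self_mem_Ici) (Set.mem_Ici.mpr ht) ht
  simp at h0
  linarith

lemma my_abs_sin_nat_mul_le (n : ℕ) (x : ℝ) : |Real.sin (n * x)| ≤ n * |Real.sin x| := by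
  induction n with
  | zero => simp
  | succ m ih =>
    have he : ((m + 1 : ℕ) : ℝ) * x = m * x + x := by push_cast; ring
    rw [he, Real.sin_add]
    calc |Real.sin (m * x) * Real.cos x + Real.cos (m * x) * Real.sin x|
        ≤ |Real.sin (m * x) * Real.cos x| + |Real.cos (m * x) * Real.sin x| := abs_add_le _ _
      _ ≤ |Real.sin (m * x)| * 1 + 1 * |Real.sin x| := by
          rw [abs_mul, abs_mul]
          gcongr
          · exact Real.abs_cos_le_one x
          · exact Real.abs_cos_le_one _
      _ ≤ (m : ℝ) * |Real.sin x| + 1 * |Real.sin x| := by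
          have := ih
          nlinarith [abs_nonneg (Real.sin x)]
      _ = ((m + 1 : ℕ) : ℝ) * |Real.sin x| := by push_cast; ring

noncomputable def fejerPoly (n : ℕ) (x : ℝ) : ℝ :=
  ∑ k ∈ Finset.range n, (1 + 2 * ∑ j ∈ Finset.range k, Real.cos (2 * (j + 1) * x))

lemma dirichlet_id (k : ℕ) (x : ℝ) :
    Real.sin x ^ 2 * (1 + 2 * ∑ j ∈ Finset.range k, Real.cos (2 * (j + 1) * x))
      = Real.sin x * Real.sin ((2 * k + 1) * x) := by
  induction k with
  | zero => simp; ring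
  | succ m ih =>
    rw [Finset.sum_range_succ]
    have h := Real.sin_sub_sin ((2 * (m : ℝ) + 3) * x) ((2 * (m : ℝ) + 1) * x)
    have e1 : ((2 * (m : ℝ) + 3) * x - (2 * (m : ℝ) + 1) * x) / 2 = x := by ring
    have e2 : ((2 * (m : ℝ) + 3) * x + (2 * (m : ℝ) + 1) * x) / 2 = (2 * (m : ℝ) + 2) * x := by
      ring
    rw [e1, e2] at h
    have e3 : (2 * ((m : ℝ) + 1) + 1) * x = (2 * (m : ℝ) + 3) * x := by ring
    have e4 : 2 * ((m : ℝ) + 1) * x = (2 * (m : ℝ) + 2) * x := by ring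
    push_cast
    rw [e3, e4]
    linear_combination ih - Real.sin x * h

lemma fejer_id (n : ℕ) (x : ℝ) :
    Real.sin x ^ 2 * fejerPoly n x = Real.sin ((n : ℝ) * x) ^ 2 := by
  induction n with
  | zero => simp [fejerPoly]
  | succ m ih =>
    rw [fejerPoly, Finset.sum_range_succ, mul_add, ← fejerPoly, ih, dirichlet_id]
    have h1 := Real.sin_sq_eq_half_sub ((m : ℝ) * x)
    have h2 := Real.sin_sq_eq_half_sub (((m : ℕ) + 1 : ℕ) * x)
    have h3 := Real.cos_sub_cos (2 * ((m : ℝ) * x)) (2 * ((((m : ℕ) + 1 : ℕ)) * x))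
    have e1 : (2 * ((m : ℝ) * x) + 2 * ((((m:ℕ) + 1 : ℕ) : ℝ) * x)) / 2 = (2 * (m : ℝ) + 1) * x := by
      push_cast; ring
    have e2 : (2 * ((m : ℝ) * x) - 2 * ((((m:ℕ) + 1 : ℕ) : ℝ) * x)) / 2 = -x := by
      push_cast; ring
    rw [e1, e2, Real.sin_neg] at h3
    push_cast at h1 h2 h3 ⊢
    nlinarith [h1, h2, h3]

lemma fejerPoly_cont (n : ℕ) : Continuous fun y : ℝ => (1 / (n:ℝ)) * fejerPoly n (π * y) := by
  unfold fejerPoly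
  apply Continuous.mul continuous_const
  apply continuous_finset_sum
  intro k _
  apply Continuous.add continuous_const
  apply Continuous.mul continuous_const
  apply continuous_finset_sum
  intro j _
  exact Real.continuous_cos.comp (by continuity)

lemma fejerKernel_eq (n : ℕ) (y : ℝ) (h : Real.sin (π * y) ≠ 0) :
    fejerKernel n y = (1 / n) * fejerPoly n (π * y) := by
  have hid := fejer_id n (π * y)
  unfold fejerKernel
  have e : (n : ℝ) * π * y = n * (π * y) := by ring
  rw [e, div_pow, ← hid]
  field_simp

lemma fejerKernel_ae (n : ℕ) : fejerKernel n =ᵐ[MeasureTheory.volume]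
    fun y => (1 / n) * fejerPoly n (π * y) := by
  have hsub : {y : ℝ | ¬ fejerKernel n y = (1 / n) * fejerPoly n (π * y)}
      ⊆ Set.range (fun k : ℤ => (k : ℝ)) := by
    intro y hy
    by_contra hmem
    apply hy
    apply fejerKernel_eq
    intro h0
    rcases Real.sin_eq_zero_iff.mp h0 with ⟨k, hk⟩
    refine hmem ⟨k, ?_⟩
    have hπ : (π : ℝ) ≠ 0 := Real.pi_ne_zero
    have h2 : π * (k : ℝ) = π * y := by linear_combination hk
    exact mul_left_cancel₀ hπ h2
  have h0 : MeasureTheory.volume {y : ℝ | ¬ fejerKernel n y = (1 / n) * fejerPoly n (π * y)} = 0 :=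
    MeasureTheory.measure_mono_null hsub ((Set.countable_range _).measure_zero _)
  exact (MeasureTheory.ae_iff).mpr h0

lemma fejerKernel_intervalIntegrable (n : ℕ) (a b : ℝ) :
    IntervalIntegrable (fejerKernel n) MeasureTheory.volume a b :=
  ((fejerPoly_cont n).intervalIntegrable a b).congr_ae
    (MeasureTheory.ae_restrict_of_ae (fejerKernel_ae n).symm)

lemma integral_cos_term (m : ℕ) : ∫ y in (-(1/2) : ℝ)..(1/2), Real.cos (2 * ((m:ℝ) + 1) * (π * y)) = 0 := by
  set c : ℝ := 2 * ((m:ℝ) + 1) * π with hc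
  have hcpos : 0 < c := by positivity
  have harg : ∀ y : ℝ, 2 * ((m:ℝ) + 1) * (π * y) = c * y := by intro y; rw [hc]; ring
  simp_rw [harg]
  have h := intervalIntegral.mul_integral_comp_mul_left (a := (-(1/2):ℝ)) (b := (1/2:ℝ))
    (f := Real.cos) (c := c)
  rw [integral_cos] at h
  have h1 : Real.sin (c * (1/2)) = 0 := by
    have : c * (1/2) = ((m + 1 : ℕ) : ℝ) * π := by rw [hc]; push_cast; ring
    rw [this]; exact Real.sin_nat_mul_pi (m+1)
  have h2 : Real.sin (c * (-(1/2))) = 0 := by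
    have : c * (-(1/2)) = ((-(m + 1) : ℤ) : ℝ) * π := by rw [hc]; push_cast; ring
    rw [this]; exact Real.sin_int_mul_pi _
  rw [h1, h2] at h
  have h' : c * (∫ y in (-(1/2) : ℝ)..(1/2), Real.cos (c * y)) = 0 := by rw [h]; ring
  exact (mul_eq_zero.mp h').resolve_left (ne_of_gt hcpos)

lemma integral_fejerPoly (n : ℕ) :
    ∫ y in (-(1/2) : ℝ)..(1/2), fejerPoly n (π * y) = n := by
  unfold fejerPoly
  rw [intervalIntegral.integral_finset_sum]
  · have hterm : ∀ k ∈ Finset.range n,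
        (∫ y in (-(1/2) : ℝ)..(1/2), (1 + 2 * ∑ j ∈ Finset.range k, Real.cos (2 * ((j:ℝ) + 1) * (π * y)))) = 1 := by
      intro k _
      rw [intervalIntegral.integral_add intervalIntegrable_const]
      · rw [intervalIntegral.integral_const_mul, intervalIntegral.integral_finset_sum]
        · rw [Finset.sum_congr rfl (fun j _ => integral_cos_term j)]
          norm_num
        · intro j _
          exact (Real.continuous_cos.comp (by continuity)).intervalIntegrable _ _
      · apply Continuous.intervalIntegrable
        apply Continuous.mul continuous_const
        apply continuous_finset_sum
        intro j _
        exact Real.continuous_cos.comp (by continuity)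
    rw [Finset.sum_congr rfl hterm]
    simp
  · intro k _
    apply Continuous.intervalIntegrable
    apply Continuous.add continuous_const
    apply Continuous.mul continuous_const
    apply continuous_finset_sum
    intro j _
    exact Real.continuous_cos.comp (by continuity)

lemma integral_fejerKernel_full (n : ℕ) (hn : 0 < n) :
    ∫ y in (-(1/2) : ℝ)..(1/2), fejerKernel n y = 1 := by
  have hcongr : ∫ y in (-(1/2) : ℝ)..(1/2), fejerKernel n y
      = ∫ y in (-(1/2) : ℝ)..(1/2), (1 / n) * fejerPoly n (π * y) :=
    intervalIntegral.integral_congr_ae ((fejerKernel_ae n).mono fun y h _ => h)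
  rw [hcongr, intervalIntegral.integral_const_mul, integral_fejerPoly]
  have : (n : ℝ) ≠ 0 := Nat.cast_ne_zero.mpr hn.ne'
  field_simp

lemma fejerKernel_ge (n : ℕ) (hn : 1 ≤ n) {y : ℝ} (hy0 : y ≠ 0) (hy : |y| ≤ 1/(2*n)) :
    (n : ℝ) - π^2 * n^3 / 3 * y^2 ≤ fejerKernel n y := by
  have hnR : (0:ℝ) < n := by exact_mod_cast Nat.pos_of_ne_zero (by omega)
  set a : ℝ := |y| with ha
  have hapos : 0 < a := abs_pos.mpr hy0
  have ha2 : a ^ 2 = y ^ 2 := sq_abs y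
  -- sines squared in terms of |y|
  have hs1 : Real.sin ((n:ℝ) * π * y) ^ 2 = Real.sin ((n:ℝ) * π * a) ^ 2 := by
    rcases abs_cases y with ⟨h, _⟩ | ⟨h, _⟩
    · rw [ha, h]
    · rw [ha, h]
      have : (n:ℝ) * π * -y = -((n:ℝ) * π * y) := by ring
      rw [this, Real.sin_neg]; ring
  have hs2 : Real.sin (π * y) ^ 2 = Real.sin (π * a) ^ 2 := by
    rcases abs_cases y with ⟨h, _⟩ | ⟨h, _⟩
    · rw [ha, h]
    · rw [ha, h]
      have : π * -y = -(π * y) := by ring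
      rw [this, Real.sin_neg]; ring
  set t : ℝ := (n:ℝ) * π * a with hta
  have htpos : 0 < t := by positivity
  have htle : t ≤ π / 2 := by
    rw [hta]
    calc (n:ℝ) * π * a ≤ (n:ℝ) * π * (1/(2*n)) := by gcongr
      _ = π / 2 := by field_simp
  have ht6 : t^2 ≤ 6 := by nlinarith [Real.pi_le_four, Real.pi_pos]
  have hlow := my_sin_ge_sub_cube htpos.le
  have hnn : 0 ≤ t - t^3/6 := by nlinarith
  have hsq : (t - t^3/6)^2 ≤ Real.sin t ^ 2 := by
    have h1 := pow_le_pow_left₀ hnn hlow 2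
    exact h1
  have hup : Real.sin (π * a) ^ 2 ≤ (π * a)^2 := by
    have h1 : |Real.sin (π * a)| ≤ |π * a| := Real.abs_sin_le_abs
    calc Real.sin (π * a) ^ 2 = |Real.sin (π * a)| ^ 2 := (sq_abs _).symm
      _ ≤ |π * a| ^ 2 := pow_le_pow_left₀ (abs_nonneg _) h1 2
      _ = (π * a) ^ 2 := sq_abs _
  have hπa_lt : π * a < π := by
    have : a < 1 := by
      calc a ≤ 1/(2*n) := hy
        _ < 1 := by
          rw [div_lt_one (by positivity)]
          have hn1 : (1:ℝ) ≤ (n:ℝ) := by exact_mod_cast hn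
          linarith
    nlinarith [Real.pi_pos]
  have hsinpos : 0 < Real.sin (π * a) := Real.sin_pos_of_pos_of_lt_pi (by positivity) hπa_lt
  have hdenpos : 0 < Real.sin (π * a) ^ 2 := by positivity
  have hker : fejerKernel n y = (1/(n:ℝ)) * (Real.sin t ^ 2 / Real.sin (π * a) ^ 2) := by
    unfold fejerKernel
    rw [div_pow, hs1, hs2]
  rw [hker]
  have step1 : (t - t^3/6)^2 / (π * a)^2 ≤ Real.sin t ^ 2 / Real.sin (π * a) ^ 2 := by
    calc (t - t^3/6)^2 / (π * a)^2 ≤ (t - t^3/6)^2 / Real.sin (π * a) ^ 2 := by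
          gcongr
      _ ≤ Real.sin t ^ 2 / Real.sin (π * a) ^ 2 := by gcongr
  have step2 : (n : ℝ) - π^2 * n^3 / 3 * y^2 ≤ (1/(n:ℝ)) * ((t - t^3/6)^2 / (π * a)^2) := by
    have hexp : (1/(n:ℝ)) * ((t - t^3/6)^2 / (π * a)^2) = (n:ℝ) * (1 - t^2/6)^2 := by
      have hne : ((π * a)^2 : ℝ) ≠ 0 := by positivity
      have hnum : (t - t^3/6)^2 = (n:ℝ)^2 * (1 - t^2/6)^2 * (π*a)^2 := by rw [hta]; ring
      rw [hnum, mul_div_cancel_right₀ _ hne]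
      have hne2 : (n:ℝ) ≠ 0 := ne_of_gt hnR
      field_simp
    rw [hexp]
    have ht2 : t^2 = π^2 * (n:ℝ)^2 * y^2 := by rw [hta, ← ha2]; ring
    have hexpand : (n:ℝ)*(1 - t^2/6)^2
        = (n:ℝ) - π^2*(n:ℝ)^3/3*y^2 + (n:ℝ)*t^4/36 := by
      linear_combination (-(n:ℝ)/3) * ht2
    have hpos : 0 ≤ (n:ℝ)*t^4/36 := by positivity
    have hcast : π^2 * (n:ℝ)^3 / 3 * y^2 = π^2 * ((n:ℕ):ℝ)^3/3*y^2 := by norm_num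
    linarith [hexpand]
  calc (n : ℝ) - π^2 * n^3 / 3 * y^2 ≤ (1/(n:ℝ)) * ((t - t^3/6)^2 / (π * a)^2) := step2
    _ ≤ (1/(n:ℝ)) * (Real.sin t ^ 2 / Real.sin (π * a) ^ 2) :=
        mul_le_mul_of_nonneg_left step1 (by positivity)

lemma fejerKernel_nonneg (n : ℕ) (y : ℝ) : 0 ≤ fejerKernel n y := by
  unfold fejerKernel; positivity

lemma fejerKernel_le (n : ℕ) (hn : 1 ≤ n) (y : ℝ) : fejerKernel n y ≤ n := by
  have hnR : (0:ℝ) < n := by exact_mod_cast Nat.pos_of_ne_zero (by omega)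
  unfold fejerKernel
  rcases eq_or_ne (Real.sin (π * y)) 0 with h | h
  · rw [h]
    simp [div_zero]
  · have h2 := my_abs_sin_nat_mul_le n (π * y)
    have hpos : 0 < Real.sin (π * y) ^ 2 :=
      lt_of_le_of_ne (sq_nonneg _) (Ne.symm (pow_ne_zero 2 h))
    have harg : (n:ℝ) * π * y = n * (π * y) := by ring
    rw [harg]
    have hq : (Real.sin ((n:ℝ) * (π * y)) / Real.sin (π * y)) ^ 2 ≤ (n:ℝ)^2 := by
      rw [div_pow, div_le_iff₀ hpos]
      calc Real.sin ((n:ℝ) * (π * y)) ^ 2 = |Real.sin ((n:ℝ) * (π * y))| ^ 2 := (sq_abs _).symm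
        _ ≤ ((n:ℝ) * |Real.sin (π * y)|) ^ 2 := by
            apply pow_le_pow_left₀ (abs_nonneg _) h2
        _ = (n:ℝ)^2 * Real.sin (π * y) ^ 2 := by rw [mul_pow, sq_abs]
    calc (1/(n:ℝ)) * (Real.sin ((n:ℝ) * (π * y)) / Real.sin (π * y)) ^ 2
        ≤ (1/(n:ℝ)) * (n:ℝ)^2 := mul_le_mul_of_nonneg_left hq (by positivity)
      _ = (n:ℝ) := by field_simp

lemma integral_fejerKernel_inner (n : ℕ) (hn : 8 ≤ n) :
    1/2 ≤ ∫ y in (-(1/(2*(n:ℝ))))..(1/(2*(n:ℝ))), fejerKernel n y := by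
  have hnR : (0:ℝ) < n := by exact_mod_cast Nat.pos_of_ne_zero (by omega)
  set δ : ℝ := 1/(2*(n:ℝ)) with hδ
  have hδpos : 0 < δ := by rw [hδ]; positivity
  have hp_cont : Continuous (fun y : ℝ => (n:ℝ) - π^2*(n:ℝ)^3/3*y^2) := by continuity
  have hae : (fun y : ℝ => (n:ℝ) - π^2*(n:ℝ)^3/3*y^2)
      ≤ᵐ[MeasureTheory.volume.restrict (Set.Icc (-δ) δ)] fejerKernel n := by
    have hz : ∀ᵐ y : ℝ ∂MeasureTheory.volume, y ∉ ({0} : Set ℝ) :=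
      MeasureTheory.measure_eq_zero_iff_ae_notMem.mp Real.volume_singleton
    filter_upwards [MeasureTheory.ae_restrict_mem measurableSet_Icc,
      MeasureTheory.ae_restrict_of_ae hz] with y hy hy0
    have hy0' : y ≠ 0 := by simpa using hy0
    have habs : |y| ≤ 1/(2*(n:ℝ)) := by
      rw [abs_le]; exact ⟨by simpa [hδ] using hy.1, by simpa [hδ] using hy.2⟩
    exact fejerKernel_ge n (by omega) hy0' habs
  have hmono := intervalIntegral.integral_mono_ae_restrict (by linarith)
    (hp_cont.intervalIntegrable _ _) (fejerKernel_intervalIntegrable n _ _) hae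
  have hcalc : ∫ y in (-δ)..δ, ((n:ℝ) - π^2*(n:ℝ)^3/3*y^2) = 1 - π^2/36 := by
    rw [intervalIntegral.integral_sub intervalIntegrable_const
      ((by continuity : Continuous (fun y : ℝ => π^2*(n:ℝ)^3/3*y^2)).intervalIntegrable _ _)]
    have h1 : ∫ _y in (-δ)..δ, (n:ℝ) = ((n:ℝ)) * (δ - (-δ)) := by
      rw [intervalIntegral.integral_const]; simp [mul_comm]
    have h2 : ∫ y in (-δ)..δ, π^2*(n:ℝ)^3/3*y^2 = π^2*(n:ℝ)^3/3 * ((δ^3 - (-δ)^3)/3) := by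
      rw [intervalIntegral.integral_const_mul, integral_pow]
      norm_num
    rw [h1, h2, hδ]
    have hne : (n:ℝ) ≠ 0 := ne_of_gt hnR
    field_simp
    ring
  have hfin : (1:ℝ)/2 ≤ 1 - π^2/36 := by
    nlinarith [Real.pi_le_four, Real.pi_pos]
  linarith

/-- If `θ` is 1-periodic, Lipschitz with `‖θ'‖_∞ ≤ n`, `θ(x) = 0` and `n ≥ 8`, then
`|σ_n θ(x)| ≤ 1/4 + ‖θ‖_∞ / 2`. -/
theorem abs_fejerMean_le_of_deriv_le (n : ℕ) (hn : 8 ≤ n) (θ : ℝ → ℝ)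
    (hper : Function.Periodic θ 1) (hdiff : Differentiable ℝ θ)
    (hlip : ∀ t : ℝ, |deriv θ t| ≤ n) (x : ℝ) (hx : θ x = 0) :
    |fejerMean n θ x| ≤ 1/4 + (⨆ t : ℝ, |θ t|) / 2 := by
  have hnR : (0:ℝ) < n := by exact_mod_cast Nat.pos_of_ne_zero (by omega)
  have hnR8 : (8:ℝ) ≤ n := by exact_mod_cast hn
  set δ : ℝ := 1/(2*(n:ℝ)) with hδ
  have hδpos : 0 < δ := by rw [hδ]; positivity
  have hδle : δ ≤ 1/16 := by
    rw [hδ]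
    rw [div_le_div_iff₀ (by positivity) (by norm_num)]
    linarith
  set M : ℝ := ⨆ t : ℝ, |θ t| with hM
  have hcont : Continuous θ := hdiff.continuous
  have habs_per : Function.Periodic (fun t => |θ t|) 1 := fun t => by simp [hper t]
  have hbdd : BddAbove (Set.range fun t => |θ t|) := by
    rw [← habs_per.image_uIcc one_ne_zero 0]
    exact (isCompact_uIcc.image (continuous_abs.comp hcont)).bddAbove
  have hMb : ∀ t, |θ t| ≤ M := fun t => le_ciSup hbdd t
  have hM0 : 0 ≤ M := (abs_nonneg _).trans (hMb 0)
  -- Lipschitz bound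
  have hLip : LipschitzWith (n : NNReal) θ := by
    apply lipschitzWith_of_nnnorm_deriv_le hdiff
    intro t
    rw [← NNReal.coe_le_coe, coe_nnnorm, Real.norm_eq_abs]
    simpa using hlip t
  have hθb : ∀ y : ℝ, |θ (x - y)| ≤ n * |y| := by
    intro y
    have h1 := hLip.dist_le_mul (x - y) x
    rw [Real.dist_eq, Real.dist_eq] at h1
    have e1 : x - y - x = -y := by ring
    rw [hx, e1, sub_zero, abs_neg] at h1
    simpa using h1
  -- integrability
  have hθc : Continuous fun y : ℝ => θ (x - y) := hcont.comp (by continuity)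
  have hθac : Continuous fun y : ℝ => |θ (x - y)| := continuous_abs.comp hθc
  have hFi : ∀ a b : ℝ, IntervalIntegrable (fejerKernel n) MeasureTheory.volume a b :=
    fejerKernel_intervalIntegrable n
  have hθFi : ∀ a b : ℝ, IntervalIntegrable (fun y => θ (x - y) * fejerKernel n y)
      MeasureTheory.volume a b := fun a b =>
    (hFi a b).continuousOn_mul hθc.continuousOn
  have hθaFi : ∀ a b : ℝ, IntervalIntegrable (fun y => |θ (x - y)| * fejerKernel n y)
      MeasureTheory.volume a b := fun a b =>
    (hFi a b).continuousOn_mul hθac.continuousOn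
  -- step 1 : bound by integral of abs
  have h1 : |fejerMean n θ x| ≤ ∫ y in (-(1/2) : ℝ)..(1/2), |θ (x - y)| * fejerKernel n y := by
    rw [fejerMean]
    refine (intervalIntegral.abs_integral_le_integral_abs (by norm_num)).trans ?_
    apply le_of_eq
    apply intervalIntegral.integral_congr
    intro y _
    dsimp only
    rw [abs_mul, abs_of_nonneg (fejerKernel_nonneg n y)]
  -- split the integral
  have hsplit : ∫ y in (-(1/2) : ℝ)..(1/2), |θ (x - y)| * fejerKernel n y
      = (∫ y in (-(1/2) : ℝ)..(-δ), |θ (x - y)| * fejerKernel n y)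
        + (∫ y in (-δ)..δ, |θ (x - y)| * fejerKernel n y)
        + (∫ y in δ..(1/2 : ℝ), |θ (x - y)| * fejerKernel n y) := by
    rw [intervalIntegral.integral_add_adjacent_intervals (hθaFi (-(1/2)) (-δ)) (hθaFi (-δ) δ),
      intervalIntegral.integral_add_adjacent_intervals (hθaFi (-(1/2)) δ) (hθaFi δ (1/2))]
  -- middle bound
  have hmid : (∫ y in (-δ)..δ, |θ (x - y)| * fejerKernel n y) ≤ 1/4 := by
    have hle : ∀ y ∈ Set.Icc (-δ) δ, |θ (x - y)| * fejerKernel n y ≤ ((n:ℝ) * |y|) * n := by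
      intro y _
      apply mul_le_mul (hθb y) (fejerKernel_le n (by omega) y)
        (fejerKernel_nonneg n y) (by positivity)
    have habsi : ∫ y in (-δ)..δ, |y| = δ^2 := by
      have hl : ∫ y in (-δ)..(0:ℝ), |y| = ∫ y in (-δ)..(0:ℝ), -y := by
        apply intervalIntegral.integral_congr
        intro y hy
        rw [Set.uIcc_of_le (by linarith)] at hy
        exact abs_of_nonpos hy.2
      have hr : ∫ y in (0:ℝ)..δ, |y| = ∫ y in (0:ℝ)..δ, y := by
        apply intervalIntegral.integral_congr
        intro y hy
        rw [Set.uIcc_of_le (by linarith)] at hy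
        exact abs_of_nonneg hy.1
      rw [← intervalIntegral.integral_add_adjacent_intervals
        (a := -δ) (b := 0) (c := δ) (continuous_abs.intervalIntegrable _ _)
        (continuous_abs.intervalIntegrable _ _), hl, hr,
        intervalIntegral.integral_neg, integral_id, integral_id]
      ring
    calc (∫ y in (-δ)..δ, |θ (x - y)| * fejerKernel n y)
        ≤ ∫ y in (-δ)..δ, ((n:ℝ) * |y|) * n := by
          apply intervalIntegral.integral_mono_on (by linarith) (hθaFi _ _)
            (((continuous_const.mul continuous_abs).mul continuous_const).intervalIntegrable _ _)
            hle
      _ = (n:ℝ)^2 * ∫ y in (-δ)..δ, |y| := by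
          rw [← intervalIntegral.integral_const_mul]
          apply intervalIntegral.integral_congr
          intro y _; ring
      _ = (n:ℝ)^2 * δ^2 := by rw [habsi]
      _ = 1/4 := by
          rw [hδ]
          field_simp
          ring
  -- outer bounds
  have hout : ∀ a b : ℝ, a ≤ b → (∫ y in a..b, |θ (x - y)| * fejerKernel n y)
      ≤ M * ∫ y in a..b, fejerKernel n y := by
    intro a b hab
    rw [← intervalIntegral.integral_const_mul]
    apply intervalIntegral.integral_mono_on hab (hθaFi a b) ((hFi a b).const_mul M)
    intro y _
    exact mul_le_mul_of_nonneg_right (hMb _) (fejerKernel_nonneg n y)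
  -- kernel mass bookkeeping
  have hFsplit : (∫ y in (-(1/2) : ℝ)..(-δ), fejerKernel n y)
      + (∫ y in (-δ)..δ, fejerKernel n y)
      + (∫ y in δ..(1/2 : ℝ), fejerKernel n y) = 1 := by
    rw [intervalIntegral.integral_add_adjacent_intervals (hFi (-(1/2)) (-δ)) (hFi (-δ) δ),
      intervalIntegral.integral_add_adjacent_intervals (hFi (-(1/2)) δ) (hFi δ (1/2))]
    exact integral_fejerKernel_full n (by omega)
  have hinner : 1/2 ≤ ∫ y in (-δ)..δ, fejerKernel n y := by
    rw [hδ]; exact integral_fejerKernel_inner n hn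
  set mL : ℝ := ∫ y in (-(1/2) : ℝ)..(-δ), fejerKernel n y with hmL
  set mR : ℝ := ∫ y in δ..(1/2 : ℝ), fejerKernel n y with hmR
  have hmass : mL + mR ≤ 1/2 := by linarith
  have houtL := hout (-(1/2)) (-δ) (by linarith)
  have houtR := hout δ (1/2) (by linarith)
  have hMmass : M * mL + M * mR ≤ M * (1/2) := by
    have h2 : M * (mL + mR) ≤ M * (1/2) := mul_le_mul_of_nonneg_left hmass hM0
    linarith [h2]
  calc |fejerMean n θ x| ≤ ∫ y in (-(1/2) : ℝ)..(1/2), |θ (x - y)| * fejerKernel n y := h1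
    _ = (∫ y in (-(1/2) : ℝ)..(-δ), |θ (x - y)| * fejerKernel n y)
        + (∫ y in (-δ)..δ, |θ (x - y)| * fejerKernel n y)
        + (∫ y in δ..(1/2 : ℝ), |θ (x - y)| * fejerKernel n y) := hsplit
    _ ≤ M * mL + 1/4 + M * mR := by
        rw [hmL, hmR]
        have := houtL; have := houtR; have := hmid
        linarith
    _ ≤ 1/4 + M / 2 := by linarith
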